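/- For every real C > 1 there exists η₀ > 0 such that for all η ∈ (0, η₀] and all θ ∈ [0, π], if ((cosh η + cos θ)/2)^C + ((cosh η − cos θ)/2)^C ≥ 1, then min(θ, π − θ) ≤ 2·η. -/

import Mathlib

lemma sinh_le_mul_exp' {t : ℝ} (ht : 0 ≤ t) : Real.sinh t ≤ t * Real.exp t := by
  rw [Real.sinh_eq]
  have h1 := Real.add_one_le_exp (-t)
  have h2 := Real.add_one_le_exp t
  have h3 : Real.exp t * Real.exp (-t) = 1 := by rw [← Real.exp_add]; simp
  have h4 := Real.exp_pos t
  nlinarith [mul_nonneg ht h4.le]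

lemma cosh_le_quad' {η : ℝ} (h0 : 0 ≤ η) (h1 : η ≤ 1/10) :
    Real.cosh η ≤ 1 + (56/100) * η^2 := by
  have h2 : Real.cosh η = 1 + 2 * Real.sinh (η/2)^2 := by
    have h3 := Real.cosh_sq (η/2)
    have h4 : Real.cosh (2 * (η/2)) = Real.cosh (η/2)^2 + Real.sinh (η/2)^2 := Real.cosh_two_mul _
    rw [show 2 * (η/2) = η by ring] at h4
    nlinarith
  have hs : Real.sinh (η/2) ≤ (η/2) * Real.exp (η/2) := sinh_le_mul_exp' (by linarith)
  have hsn : 0 ≤ Real.sinh (η/2) := Real.sinh_nonneg_iff.2 (by linarith)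
  have he : Real.exp (η/2) ≤ 20/19 := by
    have h5 := Real.add_one_le_exp (-(η/2))
    have h6 := Real.exp_pos (η/2)
    have h7 : Real.exp (η/2) * Real.exp (-(η/2)) = 1 := by rw [← Real.exp_add]; simp
    nlinarith
  have hb : Real.sinh (η/2) ≤ (10/19) * η := by nlinarith
  nlinarith

lemma bern_aux' {x C : ℝ} (hx : 0 ≤ x) (hx2 : x ≤ 1/2) (hC : 1 ≤ C) :
    (1-x)^C * (1 - x + C*x) ≤ 1 - x := by
  have hx1 : (0:ℝ) < 1 - x := by linarith
  have hb : 1 + C * (x/(1-x)) ≤ (1+x/(1-x))^C :=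
    one_add_mul_self_le_rpow_one_add (le_trans (by norm_num) (div_nonneg hx hx1.le)) hC
  have h1y : 1 + x/(1-x) = (1-x)⁻¹ := by field_simp; ring
  rw [h1y, Real.inv_rpow hx1.le] at hb
  have hP : (0:ℝ) < (1-x)^C := Real.rpow_pos_of_pos hx1 C
  have key : (1-x)^C * (1 + C * (x/(1-x))) ≤ 1 := by
    have h2 := mul_le_mul_of_nonneg_left hb hP.le
    rw [mul_inv_cancel₀ (ne_of_gt hP)] at h2
    exact h2
  have heq : (1-x) * (1 + C * (x/(1-x))) = 1 - x + C*x := by field_simp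
  nlinarith [mul_le_mul_of_nonneg_left key hx1.le]

lemma rpow_le_quad' {s C η : ℝ} (hs1 : 1 ≤ s) (hs2 : s ≤ 1 + (56/100)*η^2)
    (hC0 : 0 < C) (hq : C*η^2 ≤ 1/16) : s ^ C ≤ 1 + (6/10)*C*η^2 := by
  have hs0 : (0:ℝ) < s := by linarith
  have hη2 : 0 ≤ η^2 := sq_nonneg η
  have hlog : Real.log s ≤ (56/100)*η^2 :=
    le_trans (Real.log_le_sub_one_of_pos hs0) (by linarith)
  have hlog0 : 0 ≤ Real.log s := Real.log_nonneg hs1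
  rw [Real.rpow_def_of_pos hs0]
  set z := (56/100)*C*η^2 with hz_def
  have hz0 : 0 ≤ z := by positivity
  have hz1 : z ≤ 7/200 := by nlinarith
  have h1 : Real.log s * C ≤ z := by nlinarith
  have h2 : Real.exp (Real.log s * C) ≤ Real.exp z := Real.exp_le_exp.2 h1
  have h4 : Real.exp z ≤ 200/193 := by
    have h5 := Real.add_one_le_exp (-z)
    have h6 := Real.exp_pos z
    have h7 : Real.exp z * Real.exp (-z) = 1 := by rw [← Real.exp_add]; simp
    nlinarith
  have h8 : Real.exp z - 1 ≤ z * Real.exp z := by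
    have h5 := Real.add_one_le_exp (-z)
    have h7 : Real.exp z * Real.exp (-z) = 1 := by rw [← Real.exp_add]; simp
    nlinarith [Real.exp_pos z]
  nlinarith

set_option maxHeartbeats 1000000 in
lemma aux_main' (C : ℝ) (hC : 1 < C) :
    ∃ η₀ > (0 : ℝ), ∀ η θ : ℝ, 0 < η → η ≤ η₀ → 0 ≤ θ → θ ≤ Real.pi → 0 ≤ Real.cos θ →
      1 ≤ ((Real.cosh η + Real.cos θ) / 2) ^ C + ((Real.cosh η - Real.cos θ) / 2) ^ C →
      θ ≤ 2 * η := by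
  have hC0 : (0:ℝ) < C := by linarith
  have hC1 : (0:ℝ) < C - 1 := by linarith
  set c := ((1:ℝ)/2) ^ (C-1) with hc_def
  have hc0 : 0 < c := Real.rpow_pos_of_pos (by norm_num) _
  have hc1 : c < 1 := Real.rpow_lt_one (by norm_num) (by norm_num) hC1
  set K := C / (1 - c) with hK_def
  have hK0 : 0 < K := div_pos hC0 (by linarith)
  set A := ((1:ℝ)/4) ^ (1/(C-1)) with hA_def
  have hA0 : 0 < A := Real.rpow_pos_of_pos (by norm_num) _
  clear_value c K A
  have hsqrtC : 0 < Real.sqrt C := Real.sqrt_pos.2 hC0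
  refine ⟨min (min (1/10) (1/(4*Real.sqrt C))) (Real.sqrt (A/K)), by positivity, ?_⟩
  intro η θ hη0 hη₀ hθ0 hθπ hcθ hyp
  have hη1 : η ≤ 1/10 := le_trans hη₀ (le_trans (min_le_left _ _) (min_le_left _ _))
  have hη4 : η^2 ≤ 1/100 := by
    have := mul_le_mul hη1 hη1 hη0.le (by norm_num)
    calc η^2 = η*η := sq η
      _ ≤ 1/10*(1/10) := this
      _ = 1/100 := by norm_num
  have hη2 : C * η^2 ≤ 1/16 := by
    have h := le_trans hη₀ (le_trans (min_le_left _ _) (min_le_right _ _))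
    have h3 : η^2 ≤ (1/(4*Real.sqrt C))^2 := pow_le_pow_left₀ hη0.le h 2
    have h4 : (1/(4*Real.sqrt C))^2 = 1/(16*C) := by
      rw [div_pow, mul_pow, Real.sq_sqrt hC0.le]; norm_num
    rw [h4] at h3
    calc C * η^2 ≤ C * (1/(16*C)) := mul_le_mul_of_nonneg_left h3 hC0.le
      _ = 1/16 := by field_simp
  have hη3 : K * η^2 ≤ A := by
    have h := le_trans hη₀ (min_le_right _ _)
    have h2 : η^2 ≤ A/K := by
      have h5 : η^2 ≤ Real.sqrt (A/K)^2 := pow_le_pow_left₀ hη0.le h 2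
      rwa [Real.sq_sqrt (div_pos hA0 hK0).le] at h5
    calc K * η^2 ≤ K * (A/K) := mul_le_mul_of_nonneg_left h2 hK0.le
      _ = A := by field_simp
  have hηsq : 0 < η^2 := by positivity
  set s := Real.cosh η with hs_def
  have hs1 : 1 ≤ s := Real.one_le_cosh η
  have hs0 : (0:ℝ) < s := by linarith
  have hs2 : s ≤ 1 + (56/100)*η^2 := cosh_le_quad' hη0.le hη1
  have hs3 : s ≤ 101/100 := by linarith only [hs2, hη4]
  have hclt : Real.cos θ < s := lt_of_le_of_lt (Real.cos_le_one θ)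
    (Real.one_lt_cosh.2 (ne_of_gt hη0))
  set u := (s + Real.cos θ)/2 with hu_def
  set v := (s - Real.cos θ)/2 with hv_def
  have hu0 : (0:ℝ) < u := by rw [hu_def]; linarith
  have hv0 : (0:ℝ) < v := by rw [hv_def]; linarith
  have hv2 : v ≤ s/2 := by rw [hv_def]; linarith
  have hus : u ≤ s := by rw [hu_def]; linarith [Real.cos_le_one θ]
  have huv : u = s - v := by rw [hu_def, hv_def]; ring
  have hcos_eq : Real.cos θ = s - 2*v := by rw [hv_def]; ring
  clear_value s u v
  clear hu_def hv_def hs_def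
  -- powers of s
  have hsC_pow : s ^ C ≤ 1 + (6/10)*C*η^2 := rpow_le_quad' hs1 hs2 hC0 hη2
  have hsC1 : 1 ≤ s ^ C := by
    calc (1:ℝ) = 1 ^ C := (Real.one_rpow C).symm
      _ ≤ s ^ C := Real.rpow_le_rpow (by norm_num) hs1 hC0.le
  have hsc1 : 1 ≤ s ^ (C-1) := by
    calc (1:ℝ) = 1 ^ (C-1) := (Real.one_rpow _).symm
      _ ≤ s ^ (C-1) := Real.rpow_le_rpow (by norm_num) hs1 hC1.le
  have hCsplit : C = 1 + (C-1) := by ring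
  have hCne : (1:ℝ) + (C-1) ≠ 0 := by
    rw [show (1:ℝ)+(C-1) = C by ring]; exact ne_of_gt hC0
  have hu_split : u ^ C = u * u ^ (C-1) := by
    rw [hCsplit, Real.rpow_one_add' hu0.le hCne]; norm_num
  have hv_split : v ^ C = v * v ^ (C-1) := by
    rw [hCsplit, Real.rpow_one_add' hv0.le hCne]; norm_num
  have hs_split : s ^ C = s * s ^ (C-1) := by
    rw [hCsplit, Real.rpow_one_add' hs0.le hCne]; norm_num
  -- Stage 1 : crude bound v ≤ K η²
  have huC : u ^ C ≤ u * s ^ (C-1) := by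
    rw [hu_split]
    exact mul_le_mul_of_nonneg_left (Real.rpow_le_rpow hu0.le hus hC1.le) hu0.le
  have hvC1 : v ^ C ≤ v * (s ^ (C-1) * c) := by
    rw [hv_split]
    refine mul_le_mul_of_nonneg_left ?_ hv0.le
    calc v ^ (C-1) ≤ (s/2) ^ (C-1) := Real.rpow_le_rpow hv0.le hv2 hC1.le
      _ = (s * (1/2)) ^ (C-1) := by congr 1; ring
      _ = s ^ (C-1) * c := by
          rw [hc_def]; exact Real.mul_rpow hs0.le (by norm_num)
  have h5 : 1 ≤ u * s ^ (C-1) + v * (s ^ (C-1) * c) := le_trans hyp (add_le_add huC hvC1)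
  have h6 : v * (1-c) * s ^ (C-1) ≤ s ^ C - 1 := by
    have heq : u * s ^ (C-1) + v * (s ^ (C-1) * c) = s ^ C - v*(1-c)*s^(C-1) := by
      rw [huv, hs_split]; ring
    rw [heq] at h5
    linarith only [h5]
  have h7 : v * (1-c) ≤ s ^ C - 1 := by
    have hnn : 0 ≤ v*(1-c) := mul_nonneg hv0.le (by linarith)
    calc v*(1-c) = v*(1-c)*1 := by ring
      _ ≤ v*(1-c)*(s^(C-1)) := mul_le_mul_of_nonneg_left hsc1 hnn
      _ ≤ s ^ C - 1 := h6
  have hvK : v ≤ K * η^2 := by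
    rw [hK_def, div_mul_eq_mul_div, le_div_iff₀ (by linarith : (0:ℝ) < 1 - c)]
    linarith only [h7, hsC_pow, mul_nonneg hC0.le (sq_nonneg η)]
  -- δ bound
  have hδ : v ^ (C-1) ≤ 1/4 := by
    have h8 : v ^ (C-1) ≤ (K*η^2) ^ (C-1) := Real.rpow_le_rpow hv0.le hvK hC1.le
    have h9 : (K*η^2) ^ (C-1) ≤ A ^ (C-1) := Real.rpow_le_rpow (by positivity) hη3 hC1.le
    have h10 : A ^ (C-1) = 1/4 := by
      rw [hA_def, ← Real.rpow_mul (by norm_num : (0:ℝ) ≤ 1/4), one_div (C-1),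
        inv_mul_cancel₀ (ne_of_gt hC1), Real.rpow_one]
    linarith only [h8, h9, h10.le, h10.ge]
  have hvC4 : v ^ C ≤ v * (1/4) := by
    rw [hv_split]; exact mul_le_mul_of_nonneg_left hδ hv0.le
  -- Stage 2
  set x := v/s with hx_def
  have hx0 : 0 < x := div_pos hv0 hs0
  have hx2 : x ≤ 1/2 := by rw [hx_def, div_le_iff₀ hs0]; linarith
  have hvx : v = s * x := by rw [hx_def]; field_simp
  have hux : u = s * (1-x) := by rw [huv, hvx]; ring
  clear_value x
  have hB := bern_aux' hx0.le hx2 hC.le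
  have huC2 : u ^ C = s ^ C * (1-x) ^ C := by
    rw [hux]; exact Real.mul_rpow hs0.le (by linarith : (0:ℝ) ≤ 1-x)
  have hE : (0:ℝ) < 1 - x + C*x := by
    linarith only [mul_pos hC1 hx0, hx0]
  have hyp2 : 1 ≤ s ^ C * (1-x) ^ C + v ^ C := by rw [← huC2]; exact hyp
  have h11 : (1-x+C*x) * 1 ≤ (1-x+C*x) * (s ^ C * (1-x)^C + v ^ C) :=
    mul_le_mul_of_nonneg_left hyp2 hE.le
  have h12 : s ^ C * ((1-x)^C * (1-x+C*x)) ≤ s ^ C * (1-x) :=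
    mul_le_mul_of_nonneg_left hB (by linarith : (0:ℝ) ≤ s ^ C)
  have h13 : (1-x+C*x) * v ^ C ≤ (1-x+C*x) * (v*(1/4)) :=
    mul_le_mul_of_nonneg_left hvC4 hE.le
  have h14 : 1 - x + C*x ≤ s ^ C * (1-x) + (1-x+C*x) * (v*(1/4)) := by
    linarith only [h11, h12, h13]
  rw [hvx] at h14
  -- numeric conclusion : v ≤ 0.82 η²
  have e1 : x*C ≤ (s^C - 1) + (1-x+C*x)*(s*x)/4 := by
    have hP1x : 0 ≤ (s^C - 1)*x := mul_nonneg (by linarith only [hsC1]) hx0.le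
    nlinarith only [h14, hP1x]
  have e2 : (1-x+C*x)*(s*x) ≤ ((C+1)/2)*((101/100)*x) := by
    have m1 : 0 ≤ ((C-1)*(1/2 - x))*(s*x) :=
      mul_nonneg (mul_nonneg hC1.le (by linarith only [hx2]))
        (mul_nonneg hs0.le hx0.le)
    have m2 : 0 ≤ ((101/100 - s)*x)*(C+1) :=
      mul_nonneg (mul_nonneg (by linarith only [hs3]) hx0.le) (by linarith only [hC0])
    nlinarith only [m1, m2]
  have m3 : 0 ≤ (C-1)*x := mul_nonneg hC1.le hx0.le
  have e4 : (7475/10000)*x*C ≤ ((6/10)*η^2)*C := by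
    nlinarith only [e1, e2, m3, hsC_pow]
  have hxb : x ≤ (81/100)*η^2 := by
    have := le_of_mul_le_mul_right e4 hC0
    linarith only [this, sq_nonneg η]
  have hv_final : v ≤ (82/100)*η^2 := by
    rw [hvx]
    have m4 : 0 ≤ (101/100 - s)*x := mul_nonneg (by linarith only [hs3]) hx0.le
    nlinarith only [m4, hxb]
  -- cosine comparison
  have hcos2 : Real.cos (2*η) ≤ 1 - (199/100)*η^2 := by
    have hsin := Real.sin_gt_sub_cube hη0
    have h2m : Real.cos (2*η) = 1 - 2*Real.sin η^2 := by
      rw [Real.cos_two_mul, Real.cos_sq']; ring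
    have hη3' : η^3 ≤ (1/100)*η := by
      have := mul_le_mul_of_nonneg_right hη4 hη0.le
      nlinarith only [this]
    have hsp : (9975/10000)*η ≤ Real.sin η := by linarith only [hsin, hη3', hη0]
    have hsq := mul_le_mul hsp hsp (by linarith only [hη0]) (le_trans (by linarith only [hη0]) hsp)
    nlinarith only [h2m.le, h2m.ge, hsq, hηsq]
  have hfinal : Real.cos (2*η) ≤ Real.cos θ := by
    rw [hcos_eq]
    linarith only [hcos2, hv_final, hs1, sq_nonneg η]
  by_contra hcon
  push_neg at hcon
  have := Real.cos_lt_cos_of_nonneg_of_le_pi (by linarith only [hη0] : (0:ℝ) ≤ 2*η) hθπ hcon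
  linarith only [this, hfinal]

/-- For every `C > 1` there is `η₀ > 0` such that for all `η ∈ (0, η₀]` and
`θ ∈ [0, π]`, the inequality
`((cosh η + cos θ)/2)^C + ((cosh η − cos θ)/2)^C ≥ 1` forces
`min θ (π − θ) ≤ 2η`. -/
theorem stmt18 (C : ℝ) (hC : 1 < C) :
    ∃ η₀ > (0 : ℝ), ∀ η θ : ℝ, 0 < η → η ≤ η₀ → 0 ≤ θ → θ ≤ Real.pi →
      1 ≤ ((Real.cosh η + Real.cos θ) / 2) ^ C + ((Real.cosh η - Real.cos θ) / 2) ^ C →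
      min θ (Real.pi - θ) ≤ 2 * η := by
  obtain ⟨η₀, hη₀, h⟩ := aux_main' C hC
  refine ⟨η₀, hη₀, ?_⟩
  intro η θ hη0 hηle hθ0 hθπ hyp
  rcases le_or_gt 0 (Real.cos θ) with hcθ | hcθ
  · exact le_trans (min_le_left _ _) (h η θ hη0 hηle hθ0 hθπ hcθ hyp)
  · have h1 : (Real.cosh η + Real.cos (Real.pi - θ))/2 = (Real.cosh η - Real.cos θ)/2 := by
      rw [Real.cos_pi_sub]; ring
    have h2 : (Real.cosh η - Real.cos (Real.pi - θ))/2 = (Real.cosh η + Real.cos θ)/2 := by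
      rw [Real.cos_pi_sub]; ring
    have hyp' : 1 ≤ ((Real.cosh η + Real.cos (Real.pi - θ))/2) ^ C
        + ((Real.cosh η - Real.cos (Real.pi - θ))/2) ^ C := by
      rw [h1, h2]; linarith
    have hc' : 0 ≤ Real.cos (Real.pi - θ) := by rw [Real.cos_pi_sub]; linarith
    have := h η (Real.pi - θ) hη0 hηle (by linarith) (by linarith) hc' hyp'
    exact le_trans (min_le_right _ _) this
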